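/- Let f, g : I → ℝ be strictly monotone twice continuously differentiable functions with nowhere vanishing first derivatives and let p : I → ℝ_+^n be continuous, with n ≥ 2. Then the following conditions are pairwise equivalent: (i) A_{f,p} is globally smaller than A_{g,p}; (ii) A_{f,p} is locally smaller than A_{g,p}; (iii) the function |g'/f'| is increasing on I; (iv) f''/f' ≤ g''/g' on I; (v) if g is increasing then g ∘ f^{-1} is convex on f(I), and if g is decreasing then g ∘ f^{-1} is concave on f(I); (vi) (f(x) − f(y))/f'(y) ≤ (g(x) − g(y))/g'(y) for all x, y ∈ I. -/

import Mathlib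

open Set Function Real Filter

/-- The `n`-variable generalized Bajraktarević mean `A_{f,p}` on the interval `I`:
`A_{f,p}(x) = f⁻¹((∑ pᵢ(xᵢ) f(xᵢ)) / (∑ pᵢ(xᵢ)))`. -/
noncomputable def bajMean {n : ℕ} (I : Set ℝ) (f : ℝ → ℝ) (p : Fin n → ℝ → ℝ)
    (x : Fin n → ℝ) : ℝ :=
  Function.invFunOn f I ((∑ i, p i (x i) * f (x i)) / (∑ i, p i (x i)))

/-- The `i`-th first-order partial derivative of `Φ : Iⁿ → ℝ`. -/
noncomputable def pder {n : ℕ} (Φ : (Fin n → ℝ) → ℝ) (i : Fin n) (y : Fin n → ℝ) : ℝ :=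
  deriv (fun t => Φ (Function.update y i t)) (y i)

/-- The second-order partial derivative `∂ᵢ∂ⱼΦ`. -/
noncomputable def pder2 {n : ℕ} (Φ : (Fin n → ℝ) → ℝ) (i j : Fin n) :
    (Fin n → ℝ) → ℝ :=
  pder (pder Φ j) i

/-- `M` is locally smaller than `N`: there is an open set `U ⊆ Iⁿ` containing the
diagonal of `Iⁿ` on which `M ≤ N`. -/
def LocallySmaller {n : ℕ} (I : Set ℝ) (M N : (Fin n → ℝ) → ℝ) : Prop :=
  ∃ U : Set (Fin n → ℝ), IsOpen U ∧ U ⊆ {x | ∀ i, x i ∈ I} ∧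
    (∀ x ∈ I, (fun _ => x) ∈ U) ∧ ∀ x ∈ U, M x ≤ N x


lemma contOfDeriv {I : Set ℝ} {f f' : ℝ → ℝ} (hf : ∀ x ∈ I, HasDerivAt f (f' x) x) :
    ContinuousOn f I := fun x hx => ((hf x hx).continuousAt).continuousWithinAt

lemma twoPoints {I : Set ℝ} (hIopen : IsOpen I) (hIne : I.Nonempty) :
    ∃ a ∈ I, ∃ b ∈ I, a < b := by
  obtain ⟨x, hx⟩ := hIne
  obtain ⟨ε, hε, hball⟩ := Metric.isOpen_iff.mp hIopen x hx
  refine ⟨x, hx, x + ε / 2, hball ?_, by linarith⟩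
  simp only [Metric.mem_ball, Real.dist_eq]
  rw [abs_of_nonneg (by linarith)]
  linarith

lemma constSign {I : Set ℝ} (hIconn : I.OrdConnected) {φ : ℝ → ℝ}
    (hc : ContinuousOn φ I) (h0 : ∀ x ∈ I, φ x ≠ 0) :
    (∀ x ∈ I, 0 < φ x) ∨ (∀ x ∈ I, φ x < 0) := by
  by_contra hcon
  push_neg at hcon
  obtain ⟨⟨a, ha, ha'⟩, ⟨b, hb, hb'⟩⟩ := hcon
  have ha2 : φ a < 0 := lt_of_le_of_ne ha' (h0 a ha)
  have hb2 : 0 < φ b := lt_of_le_of_ne (le_of_not_gt fun h => absurd hb' (not_le.mpr h)) (Ne.symm (h0 b hb))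
  have hsub : uIcc a b ⊆ I := hIconn.uIcc_subset ha hb
  have : (0:ℝ) ∈ uIcc (φ a) (φ b) := by
    rw [Set.mem_uIcc]; left; exact ⟨ha2.le, hb2.le⟩
  obtain ⟨c, hc1, hc2⟩ := intermediate_value_uIcc (hc.mono hsub) this
  exact h0 c (hsub hc1) hc2

lemma derivPos {I : Set ℝ} (hIopen : IsOpen I) (hIconn : I.OrdConnected)
    (hIne : I.Nonempty) {g g' g'' : ℝ → ℝ}
    (hg : ∀ x ∈ I, HasDerivAt g (g' x) x) (hg2 : ∀ x ∈ I, HasDerivAt g' (g'' x) x)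
    (hg'0 : ∀ x ∈ I, g' x ≠ 0)
    (hm : StrictMonoOn g I) : ∀ x ∈ I, 0 < g' x := by
  rcases constSign hIconn (contOfDeriv hg2) hg'0 with h | h
  · exact h
  · exfalso
    have hanti : StrictAntiOn g I := by
      apply strictAntiOn_of_deriv_neg (hIconn.convex) (contOfDeriv hg)
      intro x hx
      rw [hIopen.interior_eq] at hx
      rw [(hg x hx).deriv]
      exact h x hx
    obtain ⟨a, ha, b, hb, hab⟩ := twoPoints hIopen hIne
    exact absurd (hm ha hb hab) (not_lt.mpr (hanti ha hb hab).le)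

lemma derivNeg {I : Set ℝ} (hIopen : IsOpen I) (hIconn : I.OrdConnected)
    (hIne : I.Nonempty) {g g' g'' : ℝ → ℝ}
    (hg : ∀ x ∈ I, HasDerivAt g (g' x) x) (hg2 : ∀ x ∈ I, HasDerivAt g' (g'' x) x)
    (hg'0 : ∀ x ∈ I, g' x ≠ 0)
    (hm : StrictAntiOn g I) : ∀ x ∈ I, g' x < 0 := by
  rcases constSign hIconn (contOfDeriv hg2) hg'0 with h | h
  · exfalso
    have hmono : StrictMonoOn g I := by
      apply strictMonoOn_of_deriv_pos (hIconn.convex) (contOfDeriv hg)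
      intro x hx
      rw [hIopen.interior_eq] at hx
      rw [(hg x hx).deriv]
      exact h x hx
    obtain ⟨a, ha, b, hb, hab⟩ := twoPoints hIopen hIne
    exact absurd (hmono ha hb hab) (not_lt.mpr (hm ha hb hab).le)
  · exact h

lemma ratio_exp {J : Set ℝ} {f' : ℝ → ℝ}
    (hsign : (∀ x ∈ J, 0 < f' x) ∨ (∀ x ∈ J, f' x < 0))
    {t y : ℝ} (ht : t ∈ J) (hy : y ∈ J) :
    f' t / f' y = Real.exp (Real.log (f' t) - Real.log (f' y)) := by
  rw [Real.exp_sub]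
  rcases hsign with h | h
  · rw [Real.exp_log (h t ht), Real.exp_log (h y hy)]
  · rw [← Real.log_neg_eq_log (f' t), ← Real.log_neg_eq_log (f' y),
      Real.exp_log (by linarith [h t ht]), Real.exp_log (by linarith [h y hy])]
    rw [neg_div_neg_eq]

section Key
variable {J : Set ℝ} {f f' f'' g g' g'' : ℝ → ℝ}

lemma keyLe (hJo : IsOpen J) (hJc : J.OrdConnected)
    (hf : ∀ x ∈ J, HasDerivAt f (f' x) x) (hf2 : ∀ x ∈ J, HasDerivAt f' (f'' x) x)
    (hf'0 : ∀ x ∈ J, f' x ≠ 0)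
    (hg : ∀ x ∈ J, HasDerivAt g (g' x) x) (hg2 : ∀ x ∈ J, HasDerivAt g' (g'' x) x)
    (hg'0 : ∀ x ∈ J, g' x ≠ 0)
    (h4 : ∀ x ∈ J, f'' x / f' x ≤ g'' x / g' x) :
    ∀ x ∈ J, ∀ y ∈ J, (f x - f y) / f' y ≤ (g x - g y) / g' y := by
  intro x hx y hy
  have hfsign := constSign hJc (contOfDeriv hf2) hf'0
  have hgsign := constSign hJc (contOfDeriv hg2) hg'0
  set Δ : ℝ → ℝ := fun t => Real.log (g' t) - Real.log (f' t) with hΔ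
  have hΔd : ∀ t ∈ J, HasDerivAt Δ (g'' t / g' t - f'' t / f' t) t := fun t ht =>
    ((hg2 t ht).log (hg'0 t ht)).sub ((hf2 t ht).log (hf'0 t ht))
  have hΔmono : MonotoneOn Δ J := by
    apply monotoneOn_of_deriv_nonneg hJc.convex
      (fun t ht => (hΔd t ht).continuousAt.continuousWithinAt)
    · intro t ht
      rw [hJo.interior_eq] at ht
      exact (hΔd t ht).differentiableAt.differentiableWithinAt
    · intro t ht
      rw [hJo.interior_eq] at ht
      rw [(hΔd t ht).deriv]
      linarith [h4 t ht]
  set φ : ℝ → ℝ := fun t => (g t - g y) / g' y - (f t - f y) / f' y with hφ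
  have hφd : ∀ t ∈ J, HasDerivAt φ (g' t / g' y - f' t / f' y) t := fun t ht =>
    (((hg t ht).sub_const _).div_const _).sub (((hf t ht).sub_const _).div_const _)
  have hratio : ∀ t ∈ J, g' t / g' y - f' t / f' y =
      Real.exp (Real.log (g' t) - Real.log (g' y)) -
        Real.exp (Real.log (f' t) - Real.log (f' y)) := fun t ht => by
    rw [← ratio_exp hgsign ht hy, ← ratio_exp hfsign ht hy]
  have hφy : φ y = 0 := by simp [hφ]
  have key : ∀ t ∈ J, Δ y ≤ Δ t → 0 ≤ g' t / g' y - f' t / f' y := by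
    intro t ht hΔle
    rw [hratio t ht]
    have : Real.log (f' t) - Real.log (f' y) ≤ Real.log (g' t) - Real.log (g' y) := by
      have := hΔle
      simp only [hΔ] at this
      linarith
    linarith [Real.exp_le_exp.mpr this]
  have key' : ∀ t ∈ J, Δ t ≤ Δ y → g' t / g' y - f' t / f' y ≤ 0 := by
    intro t ht hΔle
    rw [hratio t ht]
    have : Real.log (g' t) - Real.log (g' y) ≤ Real.log (f' t) - Real.log (f' y) := by
      simp only [hΔ] at hΔle
      linarith
    linarith [Real.exp_le_exp.mpr this]
  rcases le_total y x with hyx | hxy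
  · have hmono : MonotoneOn φ (J ∩ Ici y) := by
      apply monotoneOn_of_deriv_nonneg (hJc.convex.inter (convex_Ici y))
        (fun t ht => (hφd t ht.1).continuousAt.continuousWithinAt)
      · intro t ht
        have ht' := interior_subset ht
        exact (hφd t ht'.1).differentiableAt.differentiableWithinAt
      · intro t ht
        have ht' := interior_subset ht
        rw [(hφd t ht'.1).deriv]
        exact key t ht'.1 (hΔmono hy ht'.1 ht'.2)
    have := hmono ⟨hy, le_refl y⟩ ⟨hx, hyx⟩ hyx
    rw [hφy] at this
    simp only [hφ] at this
    linarith
  · have hanti : AntitoneOn φ (J ∩ Iic y) := by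
      apply antitoneOn_of_deriv_nonpos (hJc.convex.inter (convex_Iic y))
        (fun t ht => (hφd t ht.1).continuousAt.continuousWithinAt)
      · intro t ht
        have ht' := interior_subset ht
        exact (hφd t ht'.1).differentiableAt.differentiableWithinAt
      · intro t ht
        have ht' := interior_subset ht
        rw [(hφd t ht'.1).deriv]
        exact key' t ht'.1 (hΔmono ht'.1 hy ht'.2)
    have := hanti ⟨hx, hxy⟩ ⟨hy, le_refl y⟩ hxy
    rw [hφy] at this
    simp only [hφ] at this
    linarith

lemma keyLt (hJo : IsOpen J) (hJc : J.OrdConnected)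
    (hf : ∀ x ∈ J, HasDerivAt f (f' x) x) (hf2 : ∀ x ∈ J, HasDerivAt f' (f'' x) x)
    (hf'0 : ∀ x ∈ J, f' x ≠ 0)
    (hg : ∀ x ∈ J, HasDerivAt g (g' x) x) (hg2 : ∀ x ∈ J, HasDerivAt g' (g'' x) x)
    (hg'0 : ∀ x ∈ J, g' x ≠ 0)
    (h4 : ∀ x ∈ J, f'' x / f' x < g'' x / g' x) :
    ∀ x ∈ J, ∀ y ∈ J, x ≠ y → (f x - f y) / f' y < (g x - g y) / g' y := by
  intro x hx y hy hxy
  have hfsign := constSign hJc (contOfDeriv hf2) hf'0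
  have hgsign := constSign hJc (contOfDeriv hg2) hg'0
  set Δ : ℝ → ℝ := fun t => Real.log (g' t) - Real.log (f' t) with hΔ
  have hΔd : ∀ t ∈ J, HasDerivAt Δ (g'' t / g' t - f'' t / f' t) t := fun t ht =>
    ((hg2 t ht).log (hg'0 t ht)).sub ((hf2 t ht).log (hf'0 t ht))
  have hΔmono : StrictMonoOn Δ J := by
    apply strictMonoOn_of_deriv_pos hJc.convex
      (fun t ht => (hΔd t ht).continuousAt.continuousWithinAt)
    intro t ht
    rw [hJo.interior_eq] at ht
    rw [(hΔd t ht).deriv]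
    linarith [h4 t ht]
  set φ : ℝ → ℝ := fun t => (g t - g y) / g' y - (f t - f y) / f' y with hφ
  have hφd : ∀ t ∈ J, HasDerivAt φ (g' t / g' y - f' t / f' y) t := fun t ht =>
    (((hg t ht).sub_const _).div_const _).sub (((hf t ht).sub_const _).div_const _)
  have hratio : ∀ t ∈ J, g' t / g' y - f' t / f' y =
      Real.exp (Real.log (g' t) - Real.log (g' y)) -
        Real.exp (Real.log (f' t) - Real.log (f' y)) := fun t ht => by
    rw [← ratio_exp hgsign ht hy, ← ratio_exp hfsign ht hy]
  have hφy : φ y = 0 := by simp [hφ]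
  have key : ∀ t ∈ J, Δ y < Δ t → 0 < g' t / g' y - f' t / f' y := by
    intro t ht hΔle
    rw [hratio t ht]
    have : Real.log (f' t) - Real.log (f' y) < Real.log (g' t) - Real.log (g' y) := by
      simp only [hΔ] at hΔle
      linarith
    linarith [Real.exp_lt_exp.mpr this]
  have key' : ∀ t ∈ J, Δ t < Δ y → g' t / g' y - f' t / f' y < 0 := by
    intro t ht hΔle
    rw [hratio t ht]
    have : Real.log (g' t) - Real.log (g' y) < Real.log (f' t) - Real.log (f' y) := by
      simp only [hΔ] at hΔle
      linarith
    linarith [Real.exp_lt_exp.mpr this]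
  rcases hxy.lt_or_gt with hxy' | hxy'
  · -- x < y
    have hanti : StrictAntiOn φ (J ∩ Iic y) := by
      apply strictAntiOn_of_deriv_neg (hJc.convex.inter (convex_Iic y))
        (fun t ht => (hφd t ht.1).continuousAt.continuousWithinAt)
      intro t ht
      rw [interior_inter, hJo.interior_eq, interior_Iic] at ht
      rw [(hφd t ht.1).deriv]
      exact key' t ht.1 (hΔmono ht.1 hy ht.2)
    have := hanti ⟨hx, hxy'.le⟩ ⟨hy, le_refl y⟩ hxy'
    rw [hφy] at this
    simp only [hφ] at this
    linarith
  · -- y < x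
    have hmono : StrictMonoOn φ (J ∩ Ici y) := by
      apply strictMonoOn_of_deriv_pos (hJc.convex.inter (convex_Ici y))
        (fun t ht => (hφd t ht.1).continuousAt.continuousWithinAt)
      intro t ht
      rw [interior_inter, hJo.interior_eq, interior_Ici] at ht
      rw [(hφd t ht.1).deriv]
      exact key t ht.1 (hΔmono hy ht.1 ht.2)
    have := hmono ⟨hy, le_refl y⟩ ⟨hx, hxy'.le⟩ hxy'
    rw [hφy] at this
    simp only [hφ] at this
    linarith

end Key

lemma meanSpec {n : ℕ} (hn : 2 ≤ n) {I : Set ℝ} (hIconn : I.OrdConnected)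
    {φ : ℝ → ℝ} (p : Fin n → ℝ → ℝ)
    (hmono : StrictMonoOn φ I ∨ StrictAntiOn φ I)
    (hcont : ContinuousOn φ I)
    (hp : ∀ i, ∀ x ∈ I, 0 < p i x)
    (u : Fin n → ℝ) (hu : ∀ i, u i ∈ I) :
    bajMean I φ p u ∈ I ∧
      φ (bajMean I φ p u) = (∑ i, p i (u i) * φ (u i)) / (∑ i, p i (u i)) ∧
      ∀ a b : ℝ, (∀ i, u i ∈ Icc a b) → bajMean I φ p u ∈ Icc a b := by
  have hne : (Finset.univ : Finset (Fin n)).Nonempty := by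
    refine ⟨⟨0, by omega⟩, Finset.mem_univ _⟩
  have hinj : Set.InjOn φ I := by
    rcases hmono with h | h
    exacts [h.injOn, h.injOn]
  set A := Finset.univ.inf' hne u with hA
  set B := Finset.univ.sup' hne u with hB
  obtain ⟨iA, -, hiA⟩ := Finset.exists_mem_eq_inf' hne u
  obtain ⟨iB, -, hiB⟩ := Finset.exists_mem_eq_sup' hne u
  have hAeq : A = u iA := hiA
  have hBeq : B = u iB := hiB
  have hAI : A ∈ I := by rw [hAeq]; exact hu iA
  have hBI : B ∈ I := by rw [hBeq]; exact hu iB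
  have hAle : ∀ i, A ≤ u i := fun i => Finset.inf'_le _ (Finset.mem_univ i)
  have hBge : ∀ i, u i ≤ B := fun i => Finset.le_sup' _ (Finset.mem_univ i)
  have hAB : A ≤ B := le_trans (hAle iA) (hBge iA)
  have hIccI : Icc A B ⊆ I := hIconn.out hAI hBI
  set S := ∑ i, p i (u i) with hS
  have hSpos : 0 < S := Finset.sum_pos (fun i _ => hp i (u i) (hu i)) hne
  set c := (∑ i, p i (u i) * φ (u i)) / S with hc
  -- each value φ (u i) is in uIcc (φ A) (φ B)
  have hval : ∀ i, φ (u i) ∈ uIcc (φ A) (φ B) := by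
    intro i
    rcases hmono with h | h
    · rw [Set.uIcc_of_le (h.monotoneOn hAI hBI hAB)]
      exact ⟨h.monotoneOn hAI (hu i) (hAle i), h.monotoneOn (hu i) hBI (hBge i)⟩
    · rw [Set.uIcc_of_ge (h.antitoneOn hAI hBI hAB)]
      exact ⟨h.antitoneOn (hu i) hBI (hBge i), h.antitoneOn hAI (hu i) (hAle i)⟩
  have hcmem : c ∈ uIcc (φ A) (φ B) := by
    set m := min (φ A) (φ B)
    set M := max (φ A) (φ B)
    have h1 : S * m ≤ ∑ i, p i (u i) * φ (u i) := by
      rw [hS, Finset.sum_mul]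
      refine Finset.sum_le_sum fun i _ => ?_
      exact mul_le_mul_of_nonneg_left (hval i).1 (hp i (u i) (hu i)).le
    have h2 : (∑ i, p i (u i) * φ (u i)) ≤ S * M := by
      rw [hS, Finset.sum_mul]
      refine Finset.sum_le_sum fun i _ => ?_
      exact mul_le_mul_of_nonneg_left (hval i).2 (hp i (u i) (hu i)).le
    constructor
    · rw [hc, le_div_iff₀ hSpos]; linarith
    · rw [hc, div_le_iff₀ hSpos]; linarith
  have hsub : uIcc A B ⊆ I := by rw [Set.uIcc_of_le hAB]; exact hIccI
  obtain ⟨z, hz1, hz2⟩ := intermediate_value_uIcc (hcont.mono hsub) hcmem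
  have hzI : z ∈ I := hsub hz1
  have hex : ∃ a ∈ I, φ a = c := ⟨z, hzI, hz2⟩
  have hmem : bajMean I φ p u ∈ I := Function.invFunOn_mem hex
  have heq : φ (bajMean I φ p u) = c := Function.invFunOn_eq hex
  have hzeq : bajMean I φ p u = z := hinj hmem hzI (heq.trans hz2.symm)
  refine ⟨hmem, heq, fun a b hab => ?_⟩
  rw [hzeq]
  rw [Set.uIcc_of_le hAB] at hz1
  refine ⟨le_trans (hab iA).1 ?_, le_trans hz1.2 ?_⟩
  · rw [← hAeq]; exact hz1.1
  · rw [hBeq]; exact (hab iB).2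

lemma sum_shift {n : ℕ} (q a : Fin n → ℝ) (c d : ℝ) :
    ∑ i, q i * ((a i - c) / d) = ((∑ i, q i * a i) - (∑ i, q i) * c) / d := by
  calc ∑ i, q i * ((a i - c) / d) = ∑ i, (q i * a i - q i * c) / d := by
        refine Finset.sum_congr rfl fun i _ => ?_
        rw [← mul_div_assoc, mul_sub]
    _ = ((∑ i, q i * a i) - (∑ i, q i) * c) / d := by
        rw [← Finset.sum_div, Finset.sum_sub_distrib, ← Finset.sum_mul]

lemma meanCompareLe {n : ℕ} (hn : 2 ≤ n) {I : Set ℝ} (hIopen : IsOpen I)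
    (hIconn : I.OrdConnected) (hIne : I.Nonempty)
    {f f' f'' g g' g'' : ℝ → ℝ} (p : Fin n → ℝ → ℝ)
    (hfmono : StrictMonoOn f I ∨ StrictAntiOn f I)
    (hgmono : StrictMonoOn g I ∨ StrictAntiOn g I)
    (hf : ∀ x ∈ I, HasDerivAt f (f' x) x) (hf2 : ∀ x ∈ I, HasDerivAt f' (f'' x) x)
    (hf'0 : ∀ x ∈ I, f' x ≠ 0)
    (hg : ∀ x ∈ I, HasDerivAt g (g' x) x) (hg2 : ∀ x ∈ I, HasDerivAt g' (g'' x) x)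
    (hg'0 : ∀ x ∈ I, g' x ≠ 0)
    (hp : ∀ i, ∀ x ∈ I, 0 < p i x)
    (h6 : ∀ x ∈ I, ∀ y ∈ I, (f x - f y) / f' y ≤ (g x - g y) / g' y)
    (u : Fin n → ℝ) (hu : ∀ i, u i ∈ I) :
    bajMean I f p u ≤ bajMean I g p u := by
  have hne : (Finset.univ : Finset (Fin n)).Nonempty := ⟨⟨0, by omega⟩, Finset.mem_univ _⟩
  obtain ⟨hyI, hyval, -⟩ := meanSpec hn hIconn p hgmono (contOfDeriv hg) hp u hu
  obtain ⟨hwI, hwval, -⟩ := meanSpec hn hIconn p hfmono (contOfDeriv hf) hp u hu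
  set y := bajMean I g p u
  set w := bajMean I f p u
  set S := ∑ i, p i (u i) with hS
  have hSpos : 0 < S := Finset.sum_pos (fun i _ => hp i (u i) (hu i)) hne
  have hsum : ∑ i, p i (u i) * ((f (u i) - f y) / f' y) ≤
      ∑ i, p i (u i) * ((g (u i) - g y) / g' y) := by
    refine Finset.sum_le_sum fun i _ => ?_
    exact mul_le_mul_of_nonneg_left (h6 (u i) (hu i) y hyI) (hp i (u i) (hu i)).le
  rw [sum_shift, sum_shift, ← hS] at hsum
  have hgy : (∑ i, p i (u i) * g (u i)) = S * g y := by
    rw [hyval, mul_div_cancel₀ _ (ne_of_gt hSpos)]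
  have hfw : (∑ i, p i (u i) * f (u i)) = S * f w := by
    rw [hwval, mul_div_cancel₀ _ (ne_of_gt hSpos)]
  rw [hgy, hfw] at hsum
  have hzero : (S * g y - S * g y) / g' y = 0 := by rw [sub_self, zero_div]
  rw [hzero] at hsum
  have hkey : (f w - f y) / f' y ≤ 0 := by
    have : S * ((f w - f y) / f' y) ≤ 0 := by
      calc S * ((f w - f y) / f' y) = (S * f w - S * f y) / f' y := by
            rw [← mul_div_assoc, mul_sub]
        _ ≤ 0 := hsum
    nlinarith
  rcases hfmono with hm | hm
  · have hfd := derivPos hIopen hIconn hIne hf hf2 hf'0 hm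
    have : f w ≤ f y := by
      have := hfd y hyI
      rw [div_nonpos_iff] at hkey
      rcases hkey with ⟨h1, h2⟩ | ⟨h1, h2⟩
      · linarith
      · linarith
    by_contra hcon
    push_neg at hcon
    exact absurd (hm hyI hwI hcon) (not_lt.mpr this)
  · have hfd := derivNeg hIopen hIconn hIne hf hf2 hf'0 hm
    have : f y ≤ f w := by
      have := hfd y hyI
      rw [div_nonpos_iff] at hkey
      rcases hkey with ⟨h1, h2⟩ | ⟨h1, h2⟩
      · linarith
      · linarith
    by_contra hcon
    push_neg at hcon
    exact absurd (hm hyI hwI hcon) (not_lt.mpr this)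

lemma meanCompareLt {n : ℕ} (hn : 2 ≤ n) {I : Set ℝ} (hIopen : IsOpen I)
    (hIconn : I.OrdConnected) (hIne : I.Nonempty)
    {f f' f'' g g' g'' : ℝ → ℝ} (p : Fin n → ℝ → ℝ)
    (hfmono : StrictMonoOn f I ∨ StrictAntiOn f I)
    (hgmono : StrictMonoOn g I ∨ StrictAntiOn g I)
    (hf : ∀ x ∈ I, HasDerivAt f (f' x) x) (hf2 : ∀ x ∈ I, HasDerivAt f' (f'' x) x)
    (hf'0 : ∀ x ∈ I, f' x ≠ 0)
    (hg : ∀ x ∈ I, HasDerivAt g (g' x) x) (hg2 : ∀ x ∈ I, HasDerivAt g' (g'' x) x)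
    (hg'0 : ∀ x ∈ I, g' x ≠ 0)
    (hp : ∀ i, ∀ x ∈ I, 0 < p i x)
    {a b : ℝ} (hIab : Icc a b ⊆ I)
    (h6 : ∀ x ∈ Icc a b, ∀ y ∈ Icc a b, x ≠ y →
      (f x - f y) / f' y < (g x - g y) / g' y)
    (u : Fin n → ℝ) (hab : ∀ i, u i ∈ Icc a b)
    (hnc : ∃ i j, u i ≠ u j) :
    bajMean I f p u < bajMean I g p u := by
  have hne : (Finset.univ : Finset (Fin n)).Nonempty := ⟨⟨0, by omega⟩, Finset.mem_univ _⟩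
  have hu : ∀ i, u i ∈ I := fun i => hIab (hab i)
  obtain ⟨hyI, hyval, hybd⟩ := meanSpec hn hIconn p hgmono (contOfDeriv hg) hp u hu
  obtain ⟨hwI, hwval, -⟩ := meanSpec hn hIconn p hfmono (contOfDeriv hf) hp u hu
  set y := bajMean I g p u
  set w := bajMean I f p u
  have hyab : y ∈ Icc a b := hybd a b hab
  set S := ∑ i, p i (u i) with hS
  have hSpos : 0 < S := Finset.sum_pos (fun i _ => hp i (u i) (hu i)) hne
  have hex : ∃ i, u i ≠ y := by
    by_contra hcon
    push_neg at hcon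
    obtain ⟨i, j, hij⟩ := hnc
    rw [hcon i, hcon j] at hij
    exact hij rfl
  obtain ⟨i₀, hi₀⟩ := hex
  have hsum : ∑ i, p i (u i) * ((f (u i) - f y) / f' y) <
      ∑ i, p i (u i) * ((g (u i) - g y) / g' y) := by
    refine Finset.sum_lt_sum (fun i _ => ?_) ⟨i₀, Finset.mem_univ _, ?_⟩
    · rcases eq_or_ne (u i) y with h | h
      · rw [h]; simp
      · exact (mul_le_mul_of_nonneg_left
          (h6 (u i) (hab i) y hyab h).le (hp i (u i) (hu i)).le)
    · exact mul_lt_mul_of_pos_left (h6 (u i₀) (hab i₀) y hyab hi₀) (hp i₀ (u i₀) (hu i₀))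
  rw [sum_shift, sum_shift, ← hS] at hsum
  have hgy : (∑ i, p i (u i) * g (u i)) = S * g y := by
    rw [hyval, mul_div_cancel₀ _ (ne_of_gt hSpos)]
  have hfw : (∑ i, p i (u i) * f (u i)) = S * f w := by
    rw [hwval, mul_div_cancel₀ _ (ne_of_gt hSpos)]
  rw [hgy, hfw] at hsum
  have hzero : (S * g y - S * g y) / g' y = 0 := by rw [sub_self, zero_div]
  rw [hzero] at hsum
  have hkey : (f w - f y) / f' y < 0 := by
    have : S * ((f w - f y) / f' y) < 0 := by
      calc S * ((f w - f y) / f' y) = (S * f w - S * f y) / f' y := by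
            rw [← mul_div_assoc, mul_sub]
        _ < 0 := hsum
    nlinarith
  rcases hfmono with hm | hm
  · have hfd := derivPos hIopen hIconn hIne hf hf2 hf'0 hm
    have hlt : f w < f y := by
      have := hfd y hyI
      rw [div_neg_iff] at hkey
      rcases hkey with ⟨h1, h2⟩ | ⟨h1, h2⟩
      · linarith
      · linarith
    by_contra hcon
    push_neg at hcon
    rcases eq_or_lt_of_le hcon with h | h
    · rw [h] at hlt; exact lt_irrefl _ hlt
    · exact absurd (hm hyI hwI h) (not_lt.mpr hlt.le)
  · have hfd := derivNeg hIopen hIconn hIne hf hf2 hf'0 hm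
    have hlt : f y < f w := by
      have := hfd y hyI
      rw [div_neg_iff] at hkey
      rcases hkey with ⟨h1, h2⟩ | ⟨h1, h2⟩
      · linarith
      · linarith
    by_contra hcon
    push_neg at hcon
    rcases eq_or_lt_of_le hcon with h | h
    · rw [h] at hlt; exact lt_irrefl _ hlt
    · exact absurd (hm hyI hwI h) (not_lt.mpr hlt.le)

lemma invFun_self {I : Set ℝ} {f : ℝ → ℝ} (hinj : Set.InjOn f I) {x : ℝ}
    (hx : x ∈ I) : Function.invFunOn f I (f x) = x :=
  hinj.leftInvOn_invFunOn hx

lemma six_to_five_mono {I : Set ℝ} (hIconn : I.OrdConnected)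
    {f f' g g' : ℝ → ℝ}
    (hinj : Set.InjOn f I) (hfc : ContinuousOn f I)
    (hf'0 : ∀ x ∈ I, f' x ≠ 0) (hg'pos : ∀ x ∈ I, 0 < g' x)
    (h6 : ∀ x ∈ I, ∀ y ∈ I, (f x - f y) / f' y ≤ (g x - g y) / g' y) :
    ConvexOn ℝ (f '' I) (fun u => g (Function.invFunOn f I u)) := by
  have hIconv : Convex ℝ I := hIconn.convex
  have hconv : Convex ℝ (f '' I) :=
    ((hIconv.isPreconnected.image f hfc).ordConnected).convex
  refine ⟨hconv, ?_⟩
  rintro u ⟨x, hx, rfl⟩ v ⟨y, hy, rfl⟩ A B hA hB hAB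
  obtain ⟨z, hz, hfz⟩ := hconv (Set.mem_image_of_mem f hx) (Set.mem_image_of_mem f hy) hA hB hAB
  simp only [smul_eq_mul] at hfz ⊢
  rw [invFun_self hinj hx, invFun_self hinj hy, ← hfz, invFun_self hinj hz]
  set c := g' z / f' z with hc
  have h1 : c * (f x - f z) ≤ g x - g z := by
    have h := h6 x hx z hz
    have h' := mul_le_mul_of_nonneg_left h (hg'pos z hz).le
    rw [mul_div_cancel₀ _ (ne_of_gt (hg'pos z hz))] at h'
    calc c * (f x - f z) = g' z * ((f x - f z) / f' z) := by
          rw [hc]; ring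
      _ ≤ g x - g z := h'
  have h2 : c * (f y - f z) ≤ g y - g z := by
    have h := h6 y hy z hz
    have h' := mul_le_mul_of_nonneg_left h (hg'pos z hz).le
    rw [mul_div_cancel₀ _ (ne_of_gt (hg'pos z hz))] at h'
    calc c * (f y - f z) = g' z * ((f y - f z) / f' z) := by
          rw [hc]; ring
      _ ≤ g y - g z := h'
  have hcomb : A * (c * (f x - f z)) + B * (c * (f y - f z)) = 0 := by
    have hz' : A * f x + B * f y = f z := hfz.symm
    have : A * (c * (f x - f z)) + B * (c * (f y - f z)) =
        c * ((A * f x + B * f y) - (A + B) * f z) := by ring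
    rw [this, hz', hAB]; ring
  have e1 := mul_le_mul_of_nonneg_left h1 hA
  have e2 := mul_le_mul_of_nonneg_left h2 hB
  have e3 : A * (g x - g z) + B * (g y - g z) = A * g x + B * g y - g z := by
    have : A * (g x - g z) + B * (g y - g z) = A * g x + B * g y - (A + B) * g z := by
      ring
    rw [this, hAB, one_mul]
  linarith

lemma five_to_six_mono {I : Set ℝ} (hIopen : IsOpen I) (hIconn : I.OrdConnected)
    (hIne : I.Nonempty) {f f' f'' g g' : ℝ → ℝ}
    (hinj : Set.InjOn f I)
    (hfmono : StrictMonoOn f I ∨ StrictAntiOn f I)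
    (hf : ∀ x ∈ I, HasDerivAt f (f' x) x)
    (hf2 : ∀ x ∈ I, HasDerivAt f' (f'' x) x)
    (hf'0 : ∀ x ∈ I, f' x ≠ 0)
    (hg : ∀ x ∈ I, HasDerivAt g (g' x) x)
    (hg'pos : ∀ x ∈ I, 0 < g' x)
    (hcv : ConvexOn ℝ (f '' I) (fun u => g (Function.invFunOn f I u))) :
    ∀ x ∈ I, ∀ y ∈ I, (f x - f y) / f' y ≤ (g x - g y) / g' y := by
  intro x hx y hy
  by_contra hcon
  push_neg at hcon
  have hxy : x ≠ y := by
    rintro rfl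
    simp at hcon
  have hfxy : f x ≠ f y := fun h => hxy (hinj hx hy h)
  set c := g' y / f' y with hc
  set F : ℝ → ℝ := fun t => g t - g y - c * (f t - f y) with hF
  have hFx : F x < 0 := by
    have : F x = g' y * ((g x - g y) / g' y - (f x - f y) / f' y) := by
      rw [hF, mul_sub, mul_div_cancel₀ _ (ne_of_gt (hg'pos y hy)), hc]
      ring
    rw [this]
    exact mul_neg_of_pos_of_neg (hg'pos y hy) (by linarith)
  have hFd : HasDerivAt F 0 y := by
    have h1 : HasDerivAt (fun t => c * (f t - f y)) (c * f' y) y :=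
      ((hf y hy).sub_const (f y)).const_mul c
    have h2 : HasDerivAt F (g' y - c * f' y) y :=
      ((hg y hy).sub_const (g y)).sub h1
    have : g' y - c * f' y = 0 := by
      rw [hc, div_mul_cancel₀ _ (hf'0 y hy)]; ring
    rwa [this] at h2
  have hFy : F y = 0 := by simp [hF]
  have hslope0 : Filter.Tendsto (slope F y) (nhdsWithin y {y}ᶜ) (nhds 0) :=
    hasDerivAt_iff_tendsto_slope.mp hFd
  have hslopef : Filter.Tendsto (slope f y) (nhdsWithin y {y}ᶜ) (nhds (f' y)) :=
    hasDerivAt_iff_tendsto_slope.mp (hf y hy)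
  -- key convexity bound on Ioo between y and x (either side)
  have hbound : ∀ t, t ∈ I → (f t - f y) / (f x - f y) ∈ Icc (0:ℝ) 1 →
      F t ≤ (f t - f y) / (f x - f y) * F x := by
    intro t ht hB
    set B := (f t - f y) / (f x - f y) with hBdef
    set A := 1 - B with hAdef
    have hA : 0 ≤ A := by simp [hAdef]; linarith [hB.2]
    have hsum : A + B = 1 := by rw [hAdef]; ring
    have hB' : B * (f x - f y) = f t - f y := div_mul_cancel₀ _ (sub_ne_zero.mpr hfxy)
    have hft : A * f y + B * f x = f t := by
      have : A * f y + B * f x = f y + B * (f x - f y) := by rw [hAdef]; ring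
      rw [this, hB']; ring
    have := hcv.2 (Set.mem_image_of_mem f hy) (Set.mem_image_of_mem f hx) hA hB.1 hsum
    simp only [smul_eq_mul] at this
    rw [hft, invFun_self hinj ht, invFun_self hinj hy, invFun_self hinj hx] at this
    have hftfy : f t - f y = B * (f x - f y) := hB'.symm
    calc F t = g t - g y - c * (f t - f y) := rfl
      _ ≤ (A * g y + B * g x) - g y - c * (f t - f y) := by linarith
      _ = B * (g x - g y) - c * (B * (f x - f y)) := by
          rw [hftfy, hAdef]; ring
      _ = B * F x := by rw [hF]; ring
  rcases hxy.lt_or_gt with hlt | hlt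
  · -- x < y : use left neighborhood
    have hIoo : Ioo x y ⊆ I := fun t ht => hIconn.out hx hy ⟨ht.1.le, ht.2.le⟩
    have hBmem : ∀ t ∈ Ioo x y, (f t - f y) / (f x - f y) ∈ Icc (0:ℝ) 1 := by
      intro t ht
      rcases hfmono with hm | hm
      · have h1 : f x < f t := hm hx (hIoo ht) ht.1
        have h2 : f t < f y := hm (hIoo ht) hy ht.2
        constructor
        · rw [div_nonneg_iff]; right; exact ⟨by linarith, by linarith⟩
        · rw [div_le_one_iff]
          exact Or.inr (Or.inr ⟨by linarith, by linarith⟩)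
      · have h1 : f t < f x := hm hx (hIoo ht) ht.1
        have h2 : f y < f t := hm (hIoo ht) hy ht.2
        constructor
        · apply div_nonneg <;> linarith
        · rw [div_le_one (by linarith)]; linarith
    have hEv : ∀ᶠ t in nhdsWithin y (Iio y),
        (F x / (f x - f y)) * slope f y t ≤ slope F y t := by
      filter_upwards [Ioo_mem_nhdsLT_of_mem (⟨hlt, le_refl y⟩ : y ∈ Ioc x y)]
        with t ht
      have hFt := hbound t (hIoo ht) (hBmem t ht)
      have hty : t - y < 0 := by linarith [ht.2]
      rw [slope_def_field, slope_def_field, hFy, sub_zero]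
      have heq : F x / (f x - f y) * ((f t - f y) / (t - y)) =
          ((f t - f y) / (f x - f y) * F x) / (t - y) := by ring
      rw [heq]
      exact (div_le_div_right_of_neg hty).mpr hFt
    have hmono' : nhdsWithin y (Iio y) ≤ nhdsWithin y {y}ᶜ :=
      nhdsWithin_mono y (fun t ht => ne_of_lt ht)
    have hT1 : Filter.Tendsto (fun t => (F x / (f x - f y)) * slope f y t)
        (nhdsWithin y (Iio y)) (nhds (F x / (f x - f y) * f' y)) :=
      (hslopef.mono_left hmono').const_mul _
    have hT2 : Filter.Tendsto (slope F y) (nhdsWithin y (Iio y)) (nhds 0) :=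
      hslope0.mono_left hmono'
    have hL : F x / (f x - f y) * f' y ≤ 0 :=
      le_of_tendsto_of_tendsto hT1 hT2 hEv
    -- but L > 0 : contradiction
    have hLpos : 0 < F x / (f x - f y) * f' y := by
      have hratio : f' y / (f x - f y) < 0 := by
        rcases hfmono with hm | hm
        · have h1 : f x < f y := hm hx hy hlt
          have h2 : 0 < f' y := derivPos hIopen hIconn hIne hf hf2 hf'0 hm y hy
          exact div_neg_of_pos_of_neg h2 (by linarith)
        · have h1 : f y < f x := hm hx hy hlt
          have h2 : f' y < 0 := derivNeg hIopen hIconn hIne hf hf2 hf'0 hm y hy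
          exact div_neg_of_neg_of_pos h2 (by linarith)
      have : F x / (f x - f y) * f' y = F x * (f' y / (f x - f y)) := by ring
      rw [this]
      exact mul_pos_of_neg_of_neg hFx hratio
    linarith
  · -- y < x : right neighborhood
    have hIoo : Ioo y x ⊆ I := fun t ht => hIconn.out hy hx ⟨ht.1.le, ht.2.le⟩
    have hBmem : ∀ t ∈ Ioo y x, (f t - f y) / (f x - f y) ∈ Icc (0:ℝ) 1 := by
      intro t ht
      rcases hfmono with hm | hm
      · have h1 : f y < f t := hm hy (hIoo ht) ht.1
        have h2 : f t < f x := hm (hIoo ht) hx ht.2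
        constructor
        · apply div_nonneg <;> linarith
        · rw [div_le_one (by linarith)]; linarith
      · have h1 : f t < f y := hm hy (hIoo ht) ht.1
        have h2 : f x < f t := hm (hIoo ht) hx ht.2
        constructor
        · rw [div_nonneg_iff]; right; exact ⟨by linarith, by linarith⟩
        · rw [div_le_one_iff]
          exact Or.inr (Or.inr ⟨by linarith, by linarith⟩)
    have hEv : ∀ᶠ t in nhdsWithin y (Ioi y),
        slope F y t ≤ (F x / (f x - f y)) * slope f y t := by
      filter_upwards [Ioo_mem_nhdsGT_of_mem (⟨le_refl y, hlt⟩ : y ∈ Ico y x)]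
        with t ht
      have hFt := hbound t (hIoo ht) (hBmem t ht)
      have hty : 0 < t - y := by linarith [ht.1]
      rw [slope_def_field, slope_def_field, hFy, sub_zero]
      have heq : F x / (f x - f y) * ((f t - f y) / (t - y)) =
          ((f t - f y) / (f x - f y) * F x) / (t - y) := by ring
      rw [heq]
      exact (div_le_div_iff_of_pos_right hty).mpr hFt
    have hmono' : nhdsWithin y (Ioi y) ≤ nhdsWithin y {y}ᶜ :=
      nhdsWithin_mono y (fun t ht => ne_of_gt ht)
    have hT1 : Filter.Tendsto (fun t => (F x / (f x - f y)) * slope f y t)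
        (nhdsWithin y (Ioi y)) (nhds (F x / (f x - f y) * f' y)) :=
      (hslopef.mono_left hmono').const_mul _
    have hT2 : Filter.Tendsto (slope F y) (nhdsWithin y (Ioi y)) (nhds 0) :=
      hslope0.mono_left hmono'
    have hL : (0:ℝ) ≤ F x / (f x - f y) * f' y :=
      le_of_tendsto_of_tendsto hT2 hT1 hEv
    have hLneg : F x / (f x - f y) * f' y < 0 := by
      have hratio : 0 < f' y / (f x - f y) := by
        rcases hfmono with hm | hm
        · have h1 : f y < f x := hm hy hx hlt
          have h2 : 0 < f' y := derivPos hIopen hIconn hIne hf hf2 hf'0 hm y hy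
          exact div_pos h2 (by linarith)
        · have h1 : f x < f y := hm hy hx hlt
          have h2 : f' y < 0 := derivNeg hIopen hIconn hIne hf hf2 hf'0 hm y hy
          exact div_pos_of_neg_of_neg h2 (by linarith)
      have : F x / (f x - f y) * f' y = F x * (f' y / (f x - f y)) := by ring
      rw [this]
      exact mul_neg_of_neg_of_pos hFx hratio
    linarith


/-- Theorem 3: for strictly monotone twice continuously differentiable `f, g` with
nonvanishing first derivatives and continuous `p : I → ℝ₊ⁿ`, the conditions
(i) `A_{f,p}` globally smaller than `A_{g,p}`, (ii) `A_{f,p}` locally smaller than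
`A_{g,p}`, (iii) `|g'/f'|` increasing on `I`, (iv) `f''/f' ≤ g''/g'` on `I`,
(v) `g∘f⁻¹` convex on `f(I)` if `g` increasing / concave if `g` decreasing,
(vi) `(f(x)-f(y))/f'(y) ≤ (g(x)-g(y))/g'(y)` for all `x, y ∈ I`,
are pairwise equivalent. -/
theorem stmt16 {n : ℕ} (hn : 2 ≤ n) (I : Set ℝ) (hIopen : IsOpen I)
    (hIconn : I.OrdConnected) (hIne : I.Nonempty)
    (f f' f'' g g' g'' : ℝ → ℝ) (p : Fin n → ℝ → ℝ)
    (hfmono : StrictMonoOn f I ∨ StrictAntiOn f I)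
    (hgmono : StrictMonoOn g I ∨ StrictAntiOn g I)
    (hf : ∀ x ∈ I, HasDerivAt f (f' x) x) (hf2 : ∀ x ∈ I, HasDerivAt f' (f'' x) x)
    (hf2c : ContinuousOn f'' I) (hf'0 : ∀ x ∈ I, f' x ≠ 0)
    (hg : ∀ x ∈ I, HasDerivAt g (g' x) x) (hg2 : ∀ x ∈ I, HasDerivAt g' (g'' x) x)
    (hg2c : ContinuousOn g'' I) (hg'0 : ∀ x ∈ I, g' x ≠ 0)
    (hp : ∀ i, ∀ x ∈ I, 0 < p i x) (hpc : ∀ i, ContinuousOn (p i) I) :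
    List.TFAE
      [∀ x : Fin n → ℝ, (∀ i, x i ∈ I) → bajMean I f p x ≤ bajMean I g p x,
       LocallySmaller I (bajMean I f p) (bajMean I g p),
       MonotoneOn (fun x => |g' x / f' x|) I,
       ∀ x ∈ I, f'' x / f' x ≤ g'' x / g' x,
       (StrictMonoOn g I →
          ConvexOn ℝ (f '' I) (fun u => g (Function.invFunOn f I u))) ∧
         (StrictAntiOn g I →
          ConcaveOn ℝ (f '' I) (fun u => g (Function.invFunOn f I u))),
       ∀ x ∈ I, ∀ y ∈ I, (f x - f y) / f' y ≤ (g x - g y) / g' y] := by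
  have hfinj : Set.InjOn f I := by
    rcases hfmono with h | h
    exacts [h.injOn, h.injOn]
  set q : ℝ → ℝ := fun x => g' x / f' x with hq
  have hqc : ContinuousOn q I := (contOfDeriv hg2).div (contOfDeriv hf2) hf'0
  have hq0 : ∀ x ∈ I, q x ≠ 0 := fun x hx => div_ne_zero (hg'0 x hx) (hf'0 x hx)
  have hqsign := constSign hIconn hqc hq0
  have hqd : ∀ x ∈ I, HasDerivAt q ((g'' x * f' x - g' x * f'' x) / (f' x) ^ 2) x :=
    fun x hx => (hg2 x hx).div (hf2 x hx) (hf'0 x hx)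
  have hident : ∀ x ∈ I, (g'' x * f' x - g' x * f'' x) / (f' x) ^ 2 =
      (g'' x / g' x - f'' x / f' x) * q x := by
    intro x hx
    have h1 := hf'0 x hx
    have h2 := hg'0 x hx
    rw [hq]
    field_simp
  tfae_have 1 → 2 := by
    intro h1
    refine ⟨{x | ∀ i, x i ∈ I}, ?_, le_refl _, fun x hx i => hx, fun x hx => h1 x hx⟩
    have : {x : Fin n → ℝ | ∀ i, x i ∈ I} = ⋂ i, (fun x : Fin n → ℝ => x i) ⁻¹' I := by
      ext x; simp
    rw [this]
    exact isOpen_iInter_of_finite fun i => hIopen.preimage (continuous_apply i)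
  tfae_have 2 → 4 := by
    rintro ⟨U, hUo, hUsub, hUdiag, hUle⟩
    by_contra hcon
    push_neg at hcon
    obtain ⟨x₀, hx₀, hD0⟩ := hcon
    set D : ℝ → ℝ := fun t => f'' t / f' t - g'' t / g' t with hD
    have hDpos : 0 < D x₀ := by simp [hD]; linarith
    have hDc : ContinuousAt D x₀ := by
      have h1 : ContinuousAt f'' x₀ := hf2c.continuousAt (hIopen.mem_nhds hx₀)
      have h2 : ContinuousAt g'' x₀ := hg2c.continuousAt (hIopen.mem_nhds hx₀)
      have h3 : ContinuousAt f' x₀ := (hf2 x₀ hx₀).continuousAt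
      have h4 : ContinuousAt g' x₀ := (hg2 x₀ hx₀).continuousAt
      exact (h1.div h3 (hf'0 x₀ hx₀)).sub (h2.div h4 (hg'0 x₀ hx₀))
    have hev : ∀ᶠ t in nhds x₀, 0 < D t ∧ t ∈ I :=
      (hDc.eventually (eventually_gt_nhds hDpos)).and (hIopen.mem_nhds hx₀)
    rw [Metric.eventually_nhds_iff] at hev
    obtain ⟨δ, hδ, hball⟩ := hev
    -- the open interval J
    set J := Metric.ball x₀ δ with hJ
    have hJo : IsOpen J := Metric.isOpen_ball
    have hJc : J.OrdConnected := by
      rw [hJ, Real.ball_eq_Ioo]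
      exact ordConnected_Ioo
    have hJI : J ⊆ I := fun t ht => (hball (by rwa [← Metric.mem_ball])).2
    have hJD : ∀ t ∈ J, 0 < D t := fun t ht => (hball (by rwa [← Metric.mem_ball])).1
    have hx₀J : x₀ ∈ J := Metric.mem_ball_self hδ
    -- the point near the diagonal
    set i0 : Fin n := ⟨0, by omega⟩ with hi0
    set i1 : Fin n := ⟨1, by omega⟩ with hi1
    have hi01 : i0 ≠ i1 := by
      rw [hi0, hi1]
      exact Fin.ne_of_val_ne (by norm_num)
    set u : ℝ → (Fin n → ℝ) := fun t i => if i = i0 then t else x₀ with hu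
    have huc : Continuous u := by
      apply continuous_pi
      intro i
      by_cases h : i = i0 <;> simp [hu, h] <;> [exact continuous_id; exact continuous_const]
    have hu0 : u x₀ = fun _ => x₀ := by
      funext i
      by_cases h : i = i0 <;> simp [hu, h]
    have hUmem : u x₀ ∈ U := hu0 ▸ hUdiag x₀ hx₀
    have hpre : IsOpen (u ⁻¹' U) := hUo.preimage huc
    obtain ⟨ε, hε, hballε⟩ := Metric.isOpen_iff.mp hpre x₀ hUmem
    set t₀ := x₀ + min δ ε / 2 with ht₀
    have hmin : 0 < min δ ε := lt_min hδ hε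
    have ht₀x : x₀ < t₀ := by rw [ht₀]; linarith
    have hdist : dist t₀ x₀ = min δ ε / 2 := by
      rw [ht₀, Real.dist_eq]
      rw [add_sub_cancel_left, abs_of_pos (by linarith)]
    have ht₀J : t₀ ∈ J := by
      rw [hJ, Metric.mem_ball, hdist]
      have := min_le_left δ ε
      linarith
    have ht₀U : u t₀ ∈ U := hballε (by rw [Metric.mem_ball, hdist]; have := min_le_right δ ε; linarith)
    have hIccJ : Icc x₀ t₀ ⊆ J := hJc.out hx₀J ht₀J
    -- strict comparison on J with roles swapped
    have hkey := keyLt hJo hJc (fun x hx => hg x (hJI hx)) (fun x hx => hg2 x (hJI hx))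
      (fun x hx => hg'0 x (hJI hx)) (fun x hx => hf x (hJI hx)) (fun x hx => hf2 x (hJI hx))
      (fun x hx => hf'0 x (hJI hx))
      (fun x hx => by have := hJD x hx; simp only [hD] at this; linarith)
    have hcoord : ∀ i, u t₀ i ∈ Icc x₀ t₀ := by
      intro i
      by_cases h : i = i0 <;> simp [hu, h, ht₀x.le, le_refl]
    have hlt := meanCompareLt hn hIopen hIconn hIne p hgmono hfmono hg hg2 hg'0
      hf hf2 hf'0 hp (fun z hz => hJI (hIccJ hz))
      (fun x hx y hy hxy => hkey x (hIccJ hx) y (hIccJ hy) hxy)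
      (u t₀) hcoord
      ⟨i0, i1, by simp [hu, hi01, Ne.symm hi01]; exact ne_of_gt ht₀x⟩
    exact absurd (hUle (u t₀) ht₀U) (not_le.mpr hlt)
  tfae_have 4 → 3 := by
    intro h4
    rcases hqsign with hs | hs
    · have hmono : MonotoneOn q I := by
        apply monotoneOn_of_deriv_nonneg hIconn.convex hqc
        · intro x hx
          rw [hIopen.interior_eq] at hx
          exact (hqd x hx).differentiableAt.differentiableWithinAt
        · intro x hx
          rw [hIopen.interior_eq] at hx
          rw [(hqd x hx).deriv, hident x hx]
          exact mul_nonneg (by linarith [h4 x hx]) (hs x hx).le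
      intro a ha b hb hab
      simp only
      rw [abs_of_pos (hs a ha), abs_of_pos (hs b hb)]
      exact hmono ha hb hab
    · have hmono : MonotoneOn (fun x => -q x) I := by
        apply monotoneOn_of_deriv_nonneg hIconn.convex hqc.neg
        · intro x hx
          rw [hIopen.interior_eq] at hx
          exact (hqd x hx).neg.differentiableAt.differentiableWithinAt
        · intro x hx
          rw [hIopen.interior_eq] at hx
          rw [(hqd x hx).neg.deriv]
          have : -((g'' x * f' x - g' x * f'' x) / f' x ^ 2) =
              (g'' x / g' x - f'' x / f' x) * (-q x) := by
            rw [hident x hx]; ring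
          rw [this]
          exact mul_nonneg (by linarith [h4 x hx]) (by linarith [hs x hx])
      intro a ha b hb hab
      simp only
      rw [abs_of_neg (hs a ha), abs_of_neg (hs b hb)]
      exact hmono ha hb hab
  tfae_have 3 → 4 := by
    intro h3 x hx
    obtain ⟨ε, hε, hball⟩ := Metric.isOpen_iff.mp hIopen x hx
    rcases hqsign with hs | hs
    · -- |q| = q
      have hrd : HasDerivAt q ((g'' x / g' x - f'' x / f' x) * q x) x := by
        have := hqd x hx
        rwa [hident x hx] at this
      have hslope : Filter.Tendsto (slope q x) (nhdsWithin x (Ioi x))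
          (nhds ((g'' x / g' x - f'' x / f' x) * q x)) :=
        (hasDerivAt_iff_tendsto_slope.mp hrd).mono_left
          (nhdsWithin_mono x fun t ht => ne_of_gt ht)
      have hevpos : ∀ᶠ t in nhdsWithin x (Ioi x), 0 ≤ slope q x t := by
        filter_upwards [Ioo_mem_nhdsGT_of_mem
          (show x ∈ Ico x (x + ε) from Set.mem_Ico.mpr ⟨le_refl x, by linarith⟩)] with t ht
        have htI : t ∈ I := hball (by
          rw [Metric.mem_ball, Real.dist_eq, abs_of_pos (by linarith [ht.1])]
          linarith [ht.2])
        have hmono := h3 hx htI ht.1.le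
        simp only at hmono
        rw [abs_of_pos (hs x hx), abs_of_pos (hs t htI)] at hmono
        rw [slope_def_field]
        apply div_nonneg (by linarith) (by linarith [ht.1])
      have hge : 0 ≤ (g'' x / g' x - f'' x / f' x) * q x :=
        ge_of_tendsto hslope hevpos
      by_contra hcc
      push_neg at hcc
      exact absurd hge (not_le.mpr (mul_neg_of_neg_of_pos (by linarith) (hs x hx)))
    · -- |q| = -q
      have hrd : HasDerivAt (fun y => -q y) ((g'' x / g' x - f'' x / f' x) * (-q x)) x := by
        have h := (hqd x hx).neg
        have : -((g'' x * f' x - g' x * f'' x) / f' x ^ 2) =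
            (g'' x / g' x - f'' x / f' x) * (-q x) := by
          rw [hident x hx]; ring
        rwa [this] at h
      have hslope : Filter.Tendsto (slope (fun y => -q y) x) (nhdsWithin x (Ioi x))
          (nhds ((g'' x / g' x - f'' x / f' x) * (-q x))) :=
        (hasDerivAt_iff_tendsto_slope.mp hrd).mono_left
          (nhdsWithin_mono x fun t ht => ne_of_gt ht)
      have hevpos : ∀ᶠ t in nhdsWithin x (Ioi x), 0 ≤ slope (fun y => -q y) x t := by
        filter_upwards [Ioo_mem_nhdsGT_of_mem
          (show x ∈ Ico x (x + ε) from Set.mem_Ico.mpr ⟨le_refl x, by linarith⟩)] with t ht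
        have htI : t ∈ I := hball (by
          rw [Metric.mem_ball, Real.dist_eq, abs_of_pos (by linarith [ht.1])]
          linarith [ht.2])
        have hmono := h3 hx htI ht.1.le
        simp only at hmono
        rw [abs_of_neg (hs x hx), abs_of_neg (hs t htI)] at hmono
        rw [slope_def_field]
        apply div_nonneg (by linarith) (by linarith [ht.1])
      have hge : 0 ≤ (g'' x / g' x - f'' x / f' x) * (-q x) :=
        ge_of_tendsto hslope hevpos
      by_contra hcc
      push_neg at hcc
      exact absurd hge (not_le.mpr (mul_neg_of_neg_of_pos (by linarith)
        (by linarith [hs x hx])))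
  tfae_have 4 → 6 := by
    intro h4
    exact keyLe hIopen hIconn hf hf2 hf'0 hg hg2 hg'0 h4
  tfae_have 6 → 5 := by
    intro h6
    constructor
    · intro hgm
      exact six_to_five_mono hIconn hfinj (contOfDeriv hf) hf'0
        (derivPos hIopen hIconn hIne hg hg2 hg'0 hgm) h6
    · intro hga
      have hg'neg := derivNeg hIopen hIconn hIne hg hg2 hg'0 hga
      have h6' : ∀ x ∈ I, ∀ y ∈ I,
          (f x - f y) / f' y ≤ ((-g x) - (-g y)) / (-g' y) := by
        intro x hx y hy
        have : ((-g x) - (-g y)) / (-g' y) = (g x - g y) / g' y := by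
          rw [show (-g x) - (-g y) = -(g x - g y) by ring, neg_div_neg_eq]
        rw [this]
        exact h6 x hx y hy
      have hcv := six_to_five_mono (g := fun t => -g t) (g' := fun t => -g' t)
        hIconn hfinj (contOfDeriv hf) hf'0
        (fun x hx => by simp; linarith [hg'neg x hx]) h6'
      have := hcv.neg
      have hfun : (fun u => g (Function.invFunOn f I u)) =
          -fun u => -g (Function.invFunOn f I u) := by
        funext u; simp
      rw [hfun]; exact this
  tfae_have 5 → 6 := by
    intro h5
    rcases hgmono with hgm | hga
    · exact five_to_six_mono hIopen hIconn hIne hfinj hfmono hf hf2 hf'0 hg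
        (derivPos hIopen hIconn hIne hg hg2 hg'0 hgm) (h5.1 hgm)
    · have hg'neg := derivNeg hIopen hIconn hIne hg hg2 hg'0 hga
      have hcv : ConvexOn ℝ (f '' I) (fun u => -g (Function.invFunOn f I u)) := by
        have := (h5.2 hga).neg
        have hfun : (fun u => -g (Function.invFunOn f I u)) =
            -fun u => g (Function.invFunOn f I u) := by
          funext u; simp
        rw [hfun]; exact this
      have h6' := five_to_six_mono (g := fun t => -g t) (g' := fun t => -g' t)
        hIopen hIconn hIne hfinj hfmono hf hf2 hf'0
        (fun x hx => (hg x hx).neg)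
        (fun x hx => by simp; linarith [hg'neg x hx]) hcv
      intro x hx y hy
      have := h6' x hx y hy
      rwa [show (-g x) - (-g y) = -(g x - g y) by ring, neg_div_neg_eq] at this
  tfae_have 6 → 1 := by
    intro h6 x hx
    exact meanCompareLe hn hIopen hIconn hIne p hfmono hgmono hf hf2 hf'0
      hg hg2 hg'0 hp h6 x hx
  tfae_finish
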